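/- Let K ⊆ ℝ^p (p ≥ 2) be a simplicial cone K = { Σ_{i=1}^p α_i g_i : α_i ≥ 0 } where g₁,...,g_p are linearly independent unit vectors, and let G be the matrix with columns g_i. Then the inradius ρ(K) = max_{x ∈ K, ‖x‖=1} min_{y ∈ ∂K} ‖x - y‖ satisfies ρ(K) ≥ (1/√p) √(λ_min(G'G)/λ_max(G'G)). -/

import Mathlib

open Matrix Real

/-- The simplicial cone generated by the columns of `G`. -/
def simplicialCone (p : ℕ) (G : Matrix (Fin p) (Fin p) ℝ) :
    Set (EuclideanSpace ℝ (Fin p)) :=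
  {x | ∃ α : Fin p → ℝ, (∀ i, 0 ≤ α i) ∧ ∀ j, x j = ∑ i, α i * G j i}

/-- Rayleigh decomposition for a real hermitian matrix. -/
lemma aux_rayleigh {p : ℕ} {A : Matrix (Fin p) (Fin p) ℝ} (hA : A.IsHermitian) (v : Fin p → ℝ) :
    ∃ w : Fin p → ℝ, v ⬝ᵥ (A *ᵥ v) = ∑ i, hA.eigenvalues i * w i ^ 2 ∧
      v ⬝ᵥ v = ∑ i, w i ^ 2 := by
  classical
  set U : Matrix (Fin p) (Fin p) ℝ := (hA.eigenvectorUnitary : Matrix (Fin p) (Fin p) ℝ) with hU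
  have hUU : U * star U = 1 := (Matrix.mem_unitaryGroup_iff).mp hA.eigenvectorUnitary.2
  set w : Fin p → ℝ := star U *ᵥ v with hw
  have hstar : star U = Uᵀ := by
    simp [Matrix.star_eq_conjTranspose, Matrix.conjTranspose_eq_transpose_of_trivial]
  have key : ∀ t : Fin p → ℝ, v ⬝ᵥ (U *ᵥ t) = (star U *ᵥ v) ⬝ᵥ t := by
    intro t
    rw [Matrix.dotProduct_mulVec, hstar, Matrix.mulVec_transpose]
  have h1 : v ⬝ᵥ (A *ᵥ v) = ∑ i, hA.eigenvalues i * w i ^ 2 := by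
    conv_lhs => rw [hA.spectral_theorem, Unitary.conjStarAlgAut_apply, ← hU]
    rw [← Matrix.mulVec_mulVec, ← Matrix.mulVec_mulVec, key, ← hw]
    simp only [RCLike.ofReal_real_eq_id, Function.comp_def, id]
    rw [dotProduct, Finset.sum_congr rfl]
    intro i _
    rw [Matrix.mulVec_diagonal]
    ring
  have h2 : v ⬝ᵥ v = ∑ i, w i ^ 2 := by
    have hww : w ⬝ᵥ w = v ⬝ᵥ v := by
      rw [hw]
      nth_rewrite 1 [hstar, Matrix.mulVec_transpose, ← Matrix.dotProduct_mulVec,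
        Matrix.mulVec_mulVec, hUU, Matrix.one_mulVec]
      rfl
    rw [← hww, dotProduct, Finset.sum_congr rfl]
    intro i _; ring
  exact ⟨w, h1, h2⟩

/-- Membership in the simplicial cone via the inverse matrix. -/
lemma aux_mem {p : ℕ} (G : Matrix (Fin p) (Fin p) ℝ) (hdet : IsUnit G.det)
    (x : EuclideanSpace ℝ (Fin p)) :
    x ∈ simplicialCone p G ↔ ∀ i, 0 ≤ (G⁻¹ *ᵥ (x : Fin p → ℝ)) i := by
  constructor
  · rintro ⟨α, hα, hx⟩
    have hxe : (x : Fin p → ℝ) = G *ᵥ α := by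
      funext j
      rw [hx j, Matrix.mulVec, dotProduct]
      exact Finset.sum_congr rfl fun i _ => (mul_comm _ _)
    rw [hxe, Matrix.mulVec_mulVec, Matrix.nonsing_inv_mul G hdet, Matrix.one_mulVec]
    exact hα
  · intro h
    refine ⟨G⁻¹ *ᵥ (x : Fin p → ℝ), h, fun j => ?_⟩
    have hGx : G *ᵥ (G⁻¹ *ᵥ (x : Fin p → ℝ)) = (x : Fin p → ℝ) := by
      rw [Matrix.mulVec_mulVec, Matrix.mul_nonsing_inv G hdet, Matrix.one_mulVec]
    conv_lhs => rw [← hGx]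
    rw [Matrix.mulVec, dotProduct]
    exact Finset.sum_congr rfl fun i _ => (mul_comm _ _)

lemma aux_norm_sq {p : ℕ} (z : EuclideanSpace ℝ (Fin p)) :
    ‖z‖ ^ 2 = (z : Fin p → ℝ) ⬝ᵥ (z : Fin p → ℝ) := by
  rw [EuclideanSpace.norm_eq, Real.sq_sqrt (by positivity)]
  simp [dotProduct, Real.norm_eq_abs, sq_abs, pow_two]

/-- for a simplicial cone `K` generated by linearly independent unit vectors
(the columns of the invertible matrix `G`), the inradius
`ρ(K) = max_{x ∈ K, ‖x‖=1} min_{y ∈ ∂K} ‖x-y‖` satisfies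
`ρ(K) ≥ (1/√p) √(λ_min(G'G)/λ_max(G'G))`. -/
theorem stmt14 (p : ℕ) (hp : 2 ≤ p) (G : Matrix (Fin p) (Fin p) ℝ)
    (hunit : ∀ i, ∑ j, (G j i) ^ 2 = 1) (hdet : IsUnit G.det) :
    (1 / Real.sqrt p) *
      Real.sqrt ((⨅ i, (Matrix.isHermitian_conjTranspose_mul_self G).eigenvalues i) /
        (⨆ i, (Matrix.isHermitian_conjTranspose_mul_self G).eigenvalues i)) ≤
    sSup {r : ℝ | ∃ x : EuclideanSpace ℝ (Fin p), x ∈ simplicialCone p G ∧ ‖x‖ = 1 ∧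
      r = Metric.infDist x (frontier (simplicialCone p G))} := by
  classical
  have hpnat : 0 < p := lt_of_lt_of_le (by norm_num) hp
  have hp0 : 0 < (p : ℝ) := by exact_mod_cast hpnat
  haveI : Nonempty (Fin p) := ⟨⟨0, hpnat⟩⟩
  set A : Matrix (Fin p) (Fin p) ℝ := Gᴴ * G with hAdef
  set hA := Matrix.isHermitian_conjTranspose_mul_self G
  set eig : Fin p → ℝ := hA.eigenvalues with heig
  set lo : ℝ := ⨅ i, eig i with hlo
  set hi : ℝ := ⨆ i, eig i with hhi
  have hbddB : BddBelow (Set.range eig) := (Set.finite_range eig).bddBelow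
  have hbddA : BddAbove (Set.range eig) := (Set.finite_range eig).bddAbove
  have hlo_le : ∀ i, lo ≤ eig i := fun i => ciInf_le hbddB i
  have hle_hi : ∀ i, eig i ≤ hi := fun i => le_ciSup hbddA i
  -- eigenvalues are positive
  have heignn : ∀ i, 0 ≤ eig i := fun i =>
    Matrix.eigenvalues_conjTranspose_mul_self_nonneg G i
  have hdetA : A.det ≠ 0 := by
    rw [hAdef, Matrix.det_mul, Matrix.det_conjTranspose]
    have := hdet.ne_zero
    simp only [star_trivial]
    exact mul_ne_zero this this
  have heigne : ∀ i, eig i ≠ 0 := by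
    intro i hi0
    apply hdetA
    rw [hA.det_eq_prod_eigenvalues]
    refine Finset.prod_eq_zero (Finset.mem_univ i) ?_
    simp [heig] at hi0 ⊢
    exact_mod_cast hi0
  have heigpos : ∀ i, 0 < eig i := fun i => lt_of_le_of_ne (heignn i) (Ne.symm (heigne i))
  have hlopos : 0 < lo := by
    obtain ⟨i, hieq⟩ := exists_eq_ciInf_of_finite (f := eig)
    rw [hlo, ← hieq]; exact heigpos i
  have hhipos : 0 < hi := lt_of_lt_of_le hlopos (le_trans (hlo_le (Classical.arbitrary _))
    (hle_hi _))
  -- Rayleigh bounds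
  have hlow : ∀ v : Fin p → ℝ, lo * (v ⬝ᵥ v) ≤ v ⬝ᵥ (A *ᵥ v) := by
    intro v
    obtain ⟨w, h1, h2⟩ := aux_rayleigh hA v
    rw [h1, h2, Finset.mul_sum]
    exact Finset.sum_le_sum fun i _ =>
      mul_le_mul_of_nonneg_right (hlo_le i) (sq_nonneg _)
  have hupp : ∀ v : Fin p → ℝ, v ⬝ᵥ (A *ᵥ v) ≤ hi * (v ⬝ᵥ v) := by
    intro v
    obtain ⟨w, h1, h2⟩ := aux_rayleigh hA v
    rw [h1, h2, Finset.mul_sum]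
    exact Finset.sum_le_sum fun i _ =>
      mul_le_mul_of_nonneg_right (hle_hi i) (sq_nonneg _)
  have hAv : ∀ v : Fin p → ℝ, v ⬝ᵥ (A *ᵥ v) = (G *ᵥ v) ⬝ᵥ (G *ᵥ v) := by
    intro v
    rw [hAdef, ← Matrix.mulVec_mulVec, Matrix.dotProduct_mulVec,
      ← Matrix.vecMul_transpose, Matrix.conjTranspose_eq_transpose_of_trivial]
  -- the incenter direction
  set K := simplicialCone p G with hK
  set ones : Fin p → ℝ := fun _ => 1 with hones
  set y : EuclideanSpace ℝ (Fin p) := WithLp.toLp 2 (G *ᵥ ones : Fin p → ℝ) with hy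
  have hinvG : G⁻¹ *ᵥ (G *ᵥ ones) = ones := by
    rw [Matrix.mulVec_mulVec, Matrix.nonsing_inv_mul G hdet, Matrix.one_mulVec]
  have hyne : y ≠ 0 := by
    intro h0
    have h1 : G *ᵥ ones = (0 : Fin p → ℝ) := congrArg (fun v : EuclideanSpace ℝ (Fin p) =>
      (v : Fin p → ℝ)) h0
    have h2 : ones = 0 := by rw [← hinvG, h1, Matrix.mulVec_zero]
    have := congrFun h2 (Classical.arbitrary _)
    simp [hones] at this
  set c : ℝ := ‖y‖ with hc
  have hcpos : 0 < c := norm_pos_iff.mpr hyne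
  have hc2 : c ^ 2 ≤ p * hi := by
    have h1 : c ^ 2 = ones ⬝ᵥ (A *ᵥ ones) := by
      rw [hc, aux_norm_sq, hAv]
    have h2 : ones ⬝ᵥ ones = (p : ℝ) := by simp [hones, dotProduct]
    calc c ^ 2 = ones ⬝ᵥ (A *ᵥ ones) := h1
      _ ≤ hi * (ones ⬝ᵥ ones) := hupp ones
      _ = p * hi := by rw [h2]; ring
  set x0 : EuclideanSpace ℝ (Fin p) := c⁻¹ • y with hx0
  have hx0fn : (x0 : Fin p → ℝ) = c⁻¹ • (G *ᵥ ones) := rfl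
  have hGinvx0 : G⁻¹ *ᵥ (x0 : Fin p → ℝ) = fun _ => c⁻¹ := by
    rw [hx0fn, Matrix.mulVec_smul, hinvG]
    funext i
    simp [hones]
  have hx0norm : ‖x0‖ = 1 := by
    rw [hx0, norm_smul, Real.norm_eq_abs, abs_of_pos (inv_pos.mpr hcpos), ← hc,
      inv_mul_cancel₀ (ne_of_gt hcpos)]
  have hx0K : x0 ∈ K := (aux_mem G hdet x0).mpr
    (by rw [hGinvx0]; intro i; positivity)
  -- topological facts
  have hcont : ∀ i, Continuous
      fun x : EuclideanSpace ℝ (Fin p) => (G⁻¹ *ᵥ (x : Fin p → ℝ)) i := by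
    intro i
    simp only [Matrix.mulVec, dotProduct]
    exact continuous_finset_sum _ fun j _ =>
      continuous_const.mul ((EuclideanSpace.proj j).continuous)
  set Uo : Set (EuclideanSpace ℝ (Fin p)) :=
    {x | ∀ i, 0 < (G⁻¹ *ᵥ (x : Fin p → ℝ)) i} with hUo
  have hUoopen : IsOpen Uo := by
    have : Uo = ⋂ i, (fun x : EuclideanSpace ℝ (Fin p) =>
        (G⁻¹ *ᵥ (x : Fin p → ℝ)) i) ⁻¹' Set.Ioi 0 := by
      ext x; simp [hUo, Set.mem_iInter]
    rw [this]
    exact isOpen_iInter_of_finite fun i => (isOpen_Ioi).preimage (hcont i)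
  have hUoK : Uo ⊆ K := fun x hx => (aux_mem G hdet x).mpr fun i => le_of_lt (hx i)
  have h0K : (0 : EuclideanSpace ℝ (Fin p)) ∈ K :=
    ⟨0, fun i => le_rfl, fun j => by simp⟩
  have hnegx0 : -x0 ∉ K := by
    intro hmem
    have h1 := (aux_mem G hdet (-x0)).mp hmem (Classical.arbitrary _)
    have h2 : ((-x0 : EuclideanSpace ℝ (Fin p)) : Fin p → ℝ) = -(x0 : Fin p → ℝ) := rfl
    rw [h2, Matrix.mulVec_neg, hGinvx0] at h1
    simp only [Pi.neg_apply] at h1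
    have : (0:ℝ) < c⁻¹ := inv_pos.mpr hcpos
    linarith
  have hKuniv : K ≠ Set.univ := by
    intro h
    exact hnegx0 (h ▸ Set.mem_univ _)
  have hfront : (frontier K).Nonempty :=
    nonempty_frontier_iff.mpr ⟨⟨0, h0K⟩, hKuniv⟩
  -- the key distance bound
  set r : ℝ := 1 / Real.sqrt p * Real.sqrt (lo / hi) with hr
  have hrnn : 0 ≤ r := by positivity
  have hr2 : r ^ 2 = lo / (p * hi) := by
    rw [hr, mul_pow, div_pow, one_pow, Real.sq_sqrt hp0.le,
      Real.sq_sqrt (by positivity : (0:ℝ) ≤ lo / hi)]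
    field_simp
  have key : ∀ z ∈ frontier K, r ≤ dist x0 z := by
    intro z hz
    by_contra hlt
    push_neg at hlt
    set δ : Fin p → ℝ := G⁻¹ *ᵥ ((z : Fin p → ℝ) - (x0 : Fin p → ℝ)) with hδ
    have hGδ : G *ᵥ δ = (z : Fin p → ℝ) - (x0 : Fin p → ℝ) := by
      rw [hδ, Matrix.mulVec_mulVec, Matrix.mul_nonsing_inv G hdet, Matrix.one_mulVec]
    have hδd : lo * (δ ⬝ᵥ δ) ≤ (dist x0 z) ^ 2 := by
      have h1 := hlow δ
      rw [hAv δ, hGδ] at h1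
      have h2 : ((z - x0 : EuclideanSpace ℝ (Fin p)) : Fin p → ℝ)
          = (z : Fin p → ℝ) - (x0 : Fin p → ℝ) := rfl
      have h3 : (dist x0 z) ^ 2
          = ((z : Fin p → ℝ) - (x0 : Fin p → ℝ)) ⬝ᵥ ((z : Fin p → ℝ) - (x0 : Fin p → ℝ)) := by
        rw [dist_comm, dist_eq_norm, aux_norm_sq (z - x0), h2]
      rw [h3]
      exact h1
    have hzUo : z ∈ Uo := by
      intro i
      have s1 : δ i ^ 2 ≤ δ ⬝ᵥ δ := by
        have : δ ⬝ᵥ δ = ∑ j, δ j ^ 2 := by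
          rw [dotProduct]; exact Finset.sum_congr rfl fun j _ => (sq (δ j)).symm
        rw [this]
        exact Finset.single_le_sum (fun j _ => sq_nonneg (δ j)) (Finset.mem_univ i)
      have s2 : lo * δ i ^ 2 ≤ (dist x0 z) ^ 2 :=
        le_trans (mul_le_mul_of_nonneg_left s1 hlopos.le) hδd
      have s3 : (dist x0 z) ^ 2 < r ^ 2 := by
        have hd0 : (0:ℝ) ≤ dist x0 z := dist_nonneg
        nlinarith
      have s4 : lo * δ i ^ 2 < lo * (1 / (p * hi)) := by
        have : lo / (p * hi) = lo * (1 / (p * hi)) := by ring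
        rw [← this, ← hr2]
        exact lt_of_le_of_lt s2 s3
      have s5 : δ i ^ 2 < 1 / (p * hi) := lt_of_mul_lt_mul_left s4 hlopos.le
      have s6 : (1:ℝ) / (p * hi) ≤ c⁻¹ ^ 2 := by
        rw [inv_pow, ← one_div]
        exact one_div_le_one_div_of_le (by positivity) hc2
      have hδi2 : δ i ^ 2 < c⁻¹ ^ 2 := lt_of_lt_of_le s5 s6
      have habs : |δ i| < c⁻¹ := by
        have := lt_of_pow_lt_pow_left₀ 2 (le_of_lt (inv_pos.mpr hcpos))
          (by rw [sq_abs]; exact hδi2)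
        exact this
      have hzi : (G⁻¹ *ᵥ (z : Fin p → ℝ)) i = c⁻¹ + δ i := by
        have : δ = G⁻¹ *ᵥ (z : Fin p → ℝ) - G⁻¹ *ᵥ (x0 : Fin p → ℝ) := by
          rw [hδ, Matrix.mulVec_sub]
        rw [this]
        simp only [Pi.sub_apply, hGinvx0]
        ring
      rw [hzi]
      have := (abs_lt.mp habs).1
      linarith
    have hzint : z ∈ interior K := interior_maximal hUoK hUoopen hzUo
    exact hz.2 hzint
  -- conclude
  have hmemS : Metric.infDist x0 (frontier K) ∈
      {r : ℝ | ∃ x : EuclideanSpace ℝ (Fin p), x ∈ K ∧ ‖x‖ = 1 ∧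
        r = Metric.infDist x (frontier K)} := ⟨x0, hx0K, hx0norm, rfl⟩
  obtain ⟨z0, hz0⟩ := hfront
  have hbddS : BddAbove {r : ℝ | ∃ x : EuclideanSpace ℝ (Fin p), x ∈ K ∧ ‖x‖ = 1 ∧
      r = Metric.infDist x (frontier K)} := by
    refine ⟨1 + ‖z0‖, ?_⟩
    rintro r' ⟨x, hxK, hxn, rfl⟩
    calc Metric.infDist x (frontier K) ≤ dist x z0 := Metric.infDist_le_dist_of_mem hz0
      _ ≤ ‖x‖ + ‖z0‖ := by rw [dist_eq_norm]; exact norm_sub_le _ _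
      _ = 1 + ‖z0‖ := by rw [hxn]
  have hrinf : r ≤ Metric.infDist x0 (frontier K) := by
    by_contra hlt
    push_neg at hlt
    obtain ⟨z, hzf, hdz⟩ := (Metric.infDist_lt_iff ⟨z0, hz0⟩).mp hlt
    exact absurd hdz (not_lt.mpr (key z hzf))
  exact le_trans hrinf (le_csSup hbddS hmemS)
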